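/- Let A be an irredundant orthogonal array OA(r, N, d, k) and let |Φ⟩ = (1/√r) Σ_{i=1}^{r} |s^i_1, ..., s^i_N⟩ be the associated pure state of N qudits with d levels, where the rows of A are the s^i. Then |Φ⟩ is k-uniform: for every subset T of k of the N subsystems, the reduced density matrix of |Φ⟩⟨Φ| on T equals the maximally mixed state I/d^k. -/

import Mathlib

/-- Let `A` be an irredundant orthogonal array OA(r,N,d,k) with pairwise distinct rows,
and let `|Φ⟩ = (1/√r) Σᵢ |sⁱ₁,…,sⁱ_N⟩` be the associated pure state of `N` qudits with
`d` levels. Then `|Φ⟩` is `k`-uniform: for every subset of `k` subsystems (given by an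
injective `c : Fin k → Fin N`), the reduced density matrix of `|Φ⟩⟨Φ|` —
whose `(t,t')` matrix element in the computational basis equals
`(1/r) · #{(i,i') : rows i and i' agree outside the chosen columns, row i restricted to
the chosen columns is t and row i' is t'}` — equals the maximally mixed state `I/dᵏ`. -/
theorem oa_irredundant_k_uniform {r N d k : ℕ} (hr : 0 < r) (hk : 1 ≤ k) (hd : 2 ≤ d)
    (hkN : 2 * k ≤ N) (A : Fin r → Fin N → Fin d) (hrows : Function.Injective A)
    (hOA : ∃ lam : ℕ, ∀ c : Fin k → Fin N, Function.Injective c → ∀ t : Fin k → Fin d,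
      (Finset.univ.filter fun i : Fin r => ∀ j, A i (c j) = t j).card = lam)
    (hirr : ∀ c : Fin k → Fin N, Function.Injective c →
      ∀ i₁ i₂ : Fin r, (∀ j : Fin N, (∀ l, c l ≠ j) → A i₁ j = A i₂ j) → i₁ = i₂) :
    ∀ c : Fin k → Fin N, Function.Injective c → ∀ t t' : Fin k → Fin d,
      ((r : ℂ))⁻¹ *
        (((Finset.univ : Finset (Fin r × Fin r)).filter fun p =>
          (∀ j : Fin N, (∀ l, c l ≠ j) → A p.1 j = A p.2 j) ∧
          (∀ l, A p.1 (c l) = t l) ∧ (∀ l, A p.2 (c l) = t' l)).card : ℂ)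
      = if t = t' then ((d : ℂ) ^ k)⁻¹ else 0 := by
  obtain ⟨lam, hlam⟩ := hOA
  intro c hc t t'
  -- r = d^k * lam
  have hfib : r = d ^ k * lam := by
    have h1 : (Finset.univ : Finset (Fin r)).card =
        ∑ tt : Fin k → Fin d, ((Finset.univ : Finset (Fin r)).filter
          (fun i => (fun j => A i (c j)) = tt)).card :=
      Finset.card_eq_sum_card_fiberwise (fun i _ => Finset.mem_univ _)
    have h2 : ∀ tt : Fin k → Fin d,
        ((Finset.univ : Finset (Fin r)).filter (fun i => (fun j => A i (c j)) = tt)).card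
          = lam := by
      intro tt
      rw [← hlam c hc tt]
      congr 1
      apply Finset.filter_congr
      intro i _
      simp [funext_iff]
    simp only [h2, Finset.card_univ, Fintype.card_fin, Finset.sum_const,
      Finset.card_univ, Fintype.card_fun, Fintype.card_fin, smul_eq_mul] at h1
    simpa using h1
  by_cases htt : t = t'
  · subst htt
    simp only [if_pos rfl]
    -- card of pairs = lam
    have hcard : ((Finset.univ : Finset (Fin r × Fin r)).filter fun p =>
          (∀ j : Fin N, (∀ l, c l ≠ j) → A p.1 j = A p.2 j) ∧
          (∀ l, A p.1 (c l) = t l) ∧ (∀ l, A p.2 (c l) = t l)).card = lam := by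
      rw [← hlam c hc t]
      apply Finset.card_bij (fun p _ => p.1)
      · intro p hp
        simp only [Finset.mem_filter, Finset.mem_univ, true_and] at hp ⊢
        exact hp.2.1
      · intro p hp q hq hpq
        simp only [Finset.mem_filter, Finset.mem_univ, true_and] at hp hq
        have h1 : p.1 = p.2 := hirr c hc _ _ hp.1
        have h2 : q.1 = q.2 := hirr c hc _ _ hq.1
        exact Prod.ext hpq (h2 ▸ h1 ▸ hpq)
      · intro i hi
        simp only [Finset.mem_filter, Finset.mem_univ, true_and] at hi
        exact ⟨(i, i), by simp [Finset.mem_filter, hi], rfl⟩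
    rw [hcard]
    have hlamne : lam ≠ 0 := by
      rintro rfl
      simp [hfib] at hr
    have hdne : (d:ℂ) ^ k ≠ 0 := pow_ne_zero _ (Nat.cast_ne_zero.mpr (by omega))
    have hrC : (r : ℂ) = (d:ℂ)^k * lam := by exact_mod_cast hfib
    rw [hrC]
    field_simp
    rw [mul_comm]
    rw [if_pos trivial, one_div, inv_mul_cancel₀ hdne]
  · simp only [if_neg htt]
    have : ((Finset.univ : Finset (Fin r × Fin r)).filter fun p =>
          (∀ j : Fin N, (∀ l, c l ≠ j) → A p.1 j = A p.2 j) ∧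
          (∀ l, A p.1 (c l) = t l) ∧ (∀ l, A p.2 (c l) = t' l)) = ∅ := by
      apply Finset.filter_false_of_mem
      rintro p _ ⟨h1, h2, h3⟩
      have he : p.1 = p.2 := hirr c hc _ _ h1
      exact htt (funext fun l => by rw [← h2 l, he, h3 l])
    simp [this]
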